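/- Let G = K ≀ T ≤ S_n with n = kt, fix an SCD C_1,...,C_s of B_k/K, and let J ⊆ [s]^t be a system of representatives of the T-orbits on [s]^t. Then the map Φ sending the G-orbit [Y]_G to the T_{j̄}-orbit [X̄]_{T_{j̄}}, where X ∈ [Y]_G is chosen so that X̄ lies in the grid C(j̄) for some j̄ ∈ J, is a well-defined bijection from B_n/G onto the disjoint union over j̄ ∈ J of C(j̄)/T_{j̄}. -/

import Mathlib

namespace PaperSCD

variable {β : Type*}

/-- `x` is covered by `y` with respect to the order relation `le`. -/
def Covers (le : β → β → Prop) (x y : β) : Prop :=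
  le x y ∧ x ≠ y ∧ ∀ z, le x z → le z y → z = x ∨ z = y

/-- `r` is a rank function for the order `le`: covers raise rank by one and
minimal elements have rank zero. -/
def IsRankFn (le : β → β → Prop) (r : β → ℕ) : Prop :=
  (∀ x y, Covers le x y → r y = r x + 1) ∧ ∀ x, (∀ y, le y x → y = x) → r x = 0

/-- `C` is a chain with respect to `le`. -/
def IsChn (le : β → β → Prop) (C : Set β) : Prop :=
  ∀ x ∈ C, ∀ y ∈ C, le x y ∨ le y x

/-- `x` is covered by `y` inside the subposet `S`. -/
def CoversIn (le : β → β → Prop) (S : Set β) (x y : β) : Prop :=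
  x ∈ S ∧ y ∈ S ∧ le x y ∧ x ≠ y ∧ ∀ z ∈ S, le x z → le z y → z = x ∨ z = y

/-- The chain `C` is saturated in the ambient order: consecutive elements of `C`
are covers in the ambient order. -/
def SatChn (le : β → β → Prop) (C : Set β) : Prop :=
  ∀ x ∈ C, ∀ y ∈ C, CoversIn le C x y → Covers le x y

/-- `C` is a nonempty saturated chain which is symmetric for rank function `r`
in a poset of rank `R`. -/
def IsSymmSatChain (le : β → β → Prop) (r : β → ℕ) (R : ℕ) (C : Set β) : Prop :=
  C.Nonempty ∧ IsChn le C ∧ SatChn le C ∧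
    ∃ a ∈ C, ∃ b ∈ C, (∀ x ∈ C, le a x ∧ le x b) ∧ r a + r b = R

/-- `𝒟` is a symmetric chain decomposition. -/
def IsSCD (le : β → β → Prop) (r : β → ℕ) (R : ℕ) (𝒟 : Set (Set β)) : Prop :=
  (∀ C ∈ 𝒟, IsSymmSatChain le r R C) ∧ ∀ x : β, ∃! C, C ∈ 𝒟 ∧ x ∈ C

/-- The order `le` is a symmetric chain order. -/
def IsSCO (le : β → β → Prop) : Prop :=
  ∃ (r : β → ℕ) (R : ℕ) (𝒟 : Set (Set β)),
    IsRankFn le r ∧ (∀ x, r x ≤ R) ∧ (Nonempty β → ∃ x, r x = R) ∧ IsSCD le r R 𝒟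

/-- The quotient order on `Quot rel`: `[x] ≤ [y]` iff some representatives are comparable. -/
def qle (rel : β → β → Prop) (le : β → β → Prop) (a b : Quot rel) : Prop :=
  ∃ x y : β, Quot.mk rel x = a ∧ Quot.mk rel y = b ∧ le x y

/-- The permutation `(i, r) ↦ (ρ_r i, τ r)` of `[k] × [t]`. -/
def wrPerm {k t : ℕ} (ρ : Fin t → Equiv.Perm (Fin k)) (τ : Equiv.Perm (Fin t)) :
    Equiv.Perm (Fin k × Fin t) where
  toFun p := (ρ p.2 p.1, τ p.2)
  invFun p := ((ρ (τ.symm p.2)).symm p.1, τ.symm p.2)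
  left_inv := by rintro ⟨i, r⟩; simp
  right_inv := by rintro ⟨i, r⟩; simp

/-- The wreath product `K ≀ T` as a set of permutations of `[k] × [t]`. -/
def wreathSet {k t : ℕ} (K : Subgroup (Equiv.Perm (Fin k))) (T : Subgroup (Equiv.Perm (Fin t))) :
    Set (Equiv.Perm (Fin k × Fin t)) :=
  { φ | ∃ ρ τ, (∀ r, ρ r ∈ K) ∧ τ ∈ T ∧ φ = wrPerm ρ τ }

/-- A subgroup of a permutation group is generated by powers of pairwise disjoint cycles. -/
def GenByPowersOfDisjointCycles {α : Type*} (T : Subgroup (Equiv.Perm α)) : Prop :=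
  ∃ (m : ℕ) (σ : Fin m → Equiv.Perm α) (e : Fin m → ℕ),
    (∀ i, (σ i).IsCycle) ∧ (∀ i j, i ≠ j → (σ i).Disjoint (σ j)) ∧
    T = Subgroup.closure (Set.range fun i => σ i ^ e i)

/-- The `r`-th column of a subset of `[k] × [t]`, identified with a subset of `[k]`. -/
def col {k t : ℕ} (X : Finset (Fin k × Fin t)) (r : Fin t) : Finset (Fin k) :=
  (X.filter fun p => p.2 = r).image Prod.fst

/-- Orbit relation of `K ≤ S_k` on subsets of `[k]`. -/
def relK {k : ℕ} (K : Subgroup (Equiv.Perm (Fin k))) :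
    Finset (Fin k) → Finset (Fin k) → Prop :=
  fun A B => ∃ g ∈ K, A.image ⇑g = B

/-- Orbit relation of the wreath product `K ≀ T` on subsets of `[k] × [t]`. -/
def relW {k t : ℕ} (K : Subgroup (Equiv.Perm (Fin k))) (T : Subgroup (Equiv.Perm (Fin t))) :
    Finset (Fin k × Fin t) → Finset (Fin k × Fin t) → Prop :=
  fun X Y => ∃ φ ∈ wreathSet K T, X.image ⇑φ = Y

/-- The rank (cardinality of a representative) on `B_k/K`. -/
def qrank {k : ℕ} (K : Subgroup (Equiv.Perm (Fin k))) : Quot (relK K) → ℕ :=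
  Quot.lift Finset.card (by
    rintro A B ⟨g, -, rfl⟩
    exact (Finset.card_image_of_injective A g.injective).symm)

/-- The coordinate-permuting action `σ • f = f ∘ σ⁻¹`. -/
def actF {n : ℕ} {γ : Type*} (σ : Equiv.Perm (Fin n)) (f : Fin n → γ) : Fin n → γ :=
  fun i => f (σ.symm i)

/-- `τ` stabilizes `j̄` under the coordinate-permuting action. -/
def ActStab {t s : ℕ} (τ : Equiv.Perm (Fin t)) (j : Fin t → Fin s) : Prop :=
  ∀ r, j (τ.symm r) = j r

end PaperSCD
open PaperSCD

/-- The tuple of column orbits `X̄ = ([X ∩ N_1]_{K_1}, …, [X ∩ N_t]_{K_t})`. -/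
def Xbar {k t : ℕ} (K : Subgroup (Equiv.Perm (Fin k))) (X : Finset (Fin k × Fin t)) :
    Fin t → Quot (relK K) :=
  fun r => Quot.mk (relK K) (col X r)

/-- The grid `C(j̄) = C_{j_1}^1 × ⋯ × C_{j_t}^t`, as a subtype. -/
def Grid {k t s : ℕ} (K : Subgroup (Equiv.Perm (Fin k)))
    (𝒞 : Fin s → Set (Quot (relK K))) (v : Fin t → Fin s) :=
  {f : Fin t → Quot (relK K) // ∀ r, f r ∈ 𝒞 (v r)}

/-- Orbit relation of the stabilizer `T_{j̄}` (acting via the maps `τ̂`) on the grid `C(j̄)`. -/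
def relGrid {k t s : ℕ} (K : Subgroup (Equiv.Perm (Fin k)))
    (𝒞 : Fin s → Set (Quot (relK K))) (T : Subgroup (Equiv.Perm (Fin t)))
    (v : Fin t → Fin s) : Grid K 𝒞 v → Grid K 𝒞 v → Prop :=
  fun f g => ∃ τ ∈ T, (∀ r, v (τ.symm r) = v r) ∧ ∀ r, f.1 (τ.symm r) = g.1 r

section Aux

variable {k t s : ℕ} {K : Subgroup (Equiv.Perm (Fin k))} {T : Subgroup (Equiv.Perm (Fin t))}

lemma mem_col {X : Finset (Fin k × Fin t)} {i : Fin k} {r : Fin t} :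
    i ∈ col X r ↔ (i, r) ∈ X := by
  constructor
  · intro h
    obtain ⟨p, hp, rfl⟩ := Finset.mem_image.mp h
    obtain ⟨hpX, hpr⟩ := Finset.mem_filter.mp hp
    obtain ⟨a, b⟩ := p
    cases hpr
    exact hpX
  · intro h
    exact Finset.mem_image.mpr ⟨(i, r), Finset.mem_filter.mpr ⟨h, rfl⟩, rfl⟩

lemma eq_of_col {X Y : Finset (Fin k × Fin t)} (h : ∀ r, col X r = col Y r) : X = Y := by
  ext ⟨i, r⟩
  rw [← mem_col, ← mem_col, h]

lemma col_image (X : Finset (Fin k × Fin t)) (ρ : Fin t → Equiv.Perm (Fin k))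
    (τ : Equiv.Perm (Fin t)) (r : Fin t) :
    col (X.image (wrPerm ρ τ)) r = (col X (τ.symm r)).image (ρ (τ.symm r)) := by
  ext a
  rw [mem_col]
  simp only [Finset.mem_image, mem_col, Finset.mem_image]
  constructor
  · rintro ⟨⟨i, r'⟩, hX, h⟩
    have h1 : ρ r' i = a := congrArg Prod.fst h
    have h2 : τ r' = r := congrArg Prod.snd h
    have hr' : r' = τ.symm r := by rw [← h2, Equiv.symm_apply_apply]
    subst hr'
    exact ⟨i, hX, h1⟩
  · rintro ⟨i, hX, h⟩
    refine ⟨(i, τ.symm r), hX, ?_⟩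
    show (ρ (τ.symm r) i, τ (τ.symm r)) = (a, r)
    rw [h, Equiv.apply_symm_apply]

lemma relK_equiv : Equivalence (relK K) where
  refl A := ⟨1, one_mem _, by simp⟩
  symm := by
    rintro A B ⟨g, hg, rfl⟩
    refine ⟨g⁻¹, inv_mem hg, ?_⟩
    rw [Finset.image_image]
    have : (⇑g⁻¹ ∘ ⇑g) = id := by ext x; simp
    rw [this, Finset.image_id]
  trans := by
    rintro A B C ⟨g, hg, rfl⟩ ⟨h, hh, rfl⟩
    exact ⟨h * g, mul_mem hh hg, by
      rw [Finset.image_image]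
      rfl⟩

lemma relGrid_equiv (𝒞 : Fin s → Set (Quot (relK K))) (v : Fin t → Fin s) :
    Equivalence (relGrid K 𝒞 T v) where
  refl f := ⟨1, one_mem _, fun r => rfl, fun r => rfl⟩
  symm := by
    rintro f g ⟨τ, hτ, hv, hf⟩
    refine ⟨τ⁻¹, inv_mem hτ, fun r => ?_, fun r => ?_⟩
    · have := hv (τ r)
      rw [Equiv.Perm.inv_def, Equiv.symm_symm]
      simpa using this.symm
    · have := hf (τ r)
      rw [Equiv.Perm.inv_def, Equiv.symm_symm]
      simpa using this.symm
  trans := by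
    rintro f g h ⟨τ, hτ, hvτ, hfτ⟩ ⟨σ, hσ, hvσ, hgσ⟩
    refine ⟨σ * τ, mul_mem hσ hτ, fun r => ?_, fun r => ?_⟩
    · have h1 : (σ * τ).symm r = τ.symm (σ.symm r) := rfl
      rw [h1, hvτ, hvσ]
    · have h1 : (σ * τ).symm r = τ.symm (σ.symm r) := rfl
      rw [h1, hfτ, hgσ]

lemma relW_iff {X Y : Finset (Fin k × Fin t)} :
    relW K T X Y ↔ ∃ τ ∈ T, ∀ r, Xbar K X (τ.symm r) = Xbar K Y r := by
  constructor
  · rintro ⟨φ, ⟨ρ, τ, hρ, hτ, rfl⟩, rfl⟩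
    refine ⟨τ, hτ, fun r => ?_⟩
    exact Quot.sound ⟨ρ (τ.symm r), hρ _, (col_image X ρ τ r).symm⟩
  · rintro ⟨τ, hτ, h⟩
    have hg : ∀ r, relK K (col X (τ.symm r)) (col Y r) := fun r =>
      (relK_equiv.eqvGen_iff).mp (Quot.eq.mp (h r))
    choose g hgK hge using hg
    refine ⟨wrPerm (fun r' => g (τ r')) τ, ⟨_, τ, fun r' => hgK (τ r'), hτ, rfl⟩, ?_⟩
    apply eq_of_col
    intro r
    rw [col_image]
    simpa using hge r

lemma exists_rep_Xbar (f : Fin t → Quot (relK K)) : ∃ X, Xbar K X = f := by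
  have h : ∀ r, ∃ A, Quot.mk (relK K) A = f r := fun r => Quot.exists_rep _
  choose A hA using h
  refine ⟨Finset.univ.biUnion fun r => (A r).image fun i => (i, r), ?_⟩
  funext r
  have hcol : col (Finset.univ.biUnion fun r => (A r).image fun i => (i, r)) r = A r := by
    ext i
    rw [mem_col]
    simp only [Finset.mem_biUnion, Finset.mem_univ, Finset.mem_image, true_and]
    constructor
    · rintro ⟨r', i', hi', h⟩
      obtain ⟨h1, h2⟩ := Prod.mk.injEq .. ▸ h
      cases h1; cases h2; exact hi'
    · intro hi
      exact ⟨r, i, hi, rfl⟩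
  show Quot.mk (relK K) _ = f r
  rw [hcol]
  exact hA r

lemma sigma_congr (𝒞 : Fin s → Set (Quot (relK K))) {J : Set (Fin t → Fin s)}
    {w w' : Fin t → Fin s} (hw : w ∈ J) (hw' : w' ∈ J) (h : w' = w)
    (f : Grid K 𝒞 w) (f' : Grid K 𝒞 w')
    (hrel : relGrid K 𝒞 T w f ⟨f'.1, h ▸ f'.2⟩) :
    (⟨⟨w, hw⟩, Quot.mk _ f⟩ :
        Σ u : {u : Fin t → Fin s // u ∈ J}, Quot (relGrid K 𝒞 T u.1)) =
      ⟨⟨w', hw'⟩, Quot.mk _ f'⟩ := by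
  subst h
  exact congrArg
    (fun q : Quot (relGrid K 𝒞 T w') =>
      (⟨⟨w', hw⟩, q⟩ : Σ u : {u : Fin t → Fin s // u ∈ J}, Quot (relGrid K 𝒞 T u.1)))
    (Quot.sound hrel)

lemma sigma_inj (𝒞 : Fin s → Set (Quot (relK K))) {J : Set (Fin t → Fin s)}
    {w w' : Fin t → Fin s} (hw : w ∈ J) (hw' : w' ∈ J)
    (f : Grid K 𝒞 w) (f' : Grid K 𝒞 w')
    (h : (⟨⟨w, hw⟩, Quot.mk _ f⟩ :
        Σ u : {u : Fin t → Fin s // u ∈ J}, Quot (relGrid K 𝒞 T u.1)) =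
      ⟨⟨w', hw'⟩, Quot.mk _ f'⟩) :
    ∃ τ ∈ T, ∀ r, f.1 (τ.symm r) = f'.1 r := by
  have hww : w = w' := congrArg (fun z => z.1.1) h
  subst hww
  have h2 : Quot.mk (relGrid K 𝒞 T w) f = Quot.mk (relGrid K 𝒞 T w) f' :=
    eq_of_heq (Sigma.ext_iff.mp h).2
  obtain ⟨τ, hτ, -, hfe⟩ := ((relGrid_equiv 𝒞 w).eqvGen_iff).mp (Quot.eq.mp h2)
  exact ⟨τ, hτ, hfe⟩

end Aux

/-- With an SCD `C_1, …, C_s` of `B_k/K` and a system `J` of representatives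
of the `T`-orbits on `[s]^t`, the map `Φ` sending `[Y]_G` (for `G = K ≀ T`) to `[X̄]_{T_{j̄}}`,
where `X ∈ [Y]_G` has `X̄ ∈ C(j̄)` with `j̄ ∈ J`, is a well-defined bijection from `B_n/G` onto
the disjoint union over `j̄ ∈ J` of `C(j̄)/T_{j̄}`. -/
theorem stmt_6 {k t s : ℕ} (K : Subgroup (Equiv.Perm (Fin k)))
    (T : Subgroup (Equiv.Perm (Fin t)))
    (𝒞 : Fin s → Set (Quot (relK K)))
    (hchain : ∀ j, IsSymmSatChain (qle (relK K) (· ⊆ ·)) (qrank K) k (𝒞 j))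
    (hpart : ∀ x, ∃! j : Fin s, x ∈ 𝒞 j)
    (J : Set (Fin t → Fin s))
    (hJ : ∀ v : Fin t → Fin s, ∃! w, w ∈ J ∧ ∃ τ ∈ T, (fun r => v (τ.symm r)) = w) :
    ∃ Φ : Quot (relW K T) → Σ w : {w : Fin t → Fin s // w ∈ J}, Quot (relGrid K 𝒞 T w.1),
      Function.Bijective Φ ∧
      ∀ (X : Finset (Fin k × Fin t)) (w : Fin t → Fin s) (hw : w ∈ J)
        (hX : ∀ r, Xbar K X r ∈ 𝒞 (w r)),
        Φ (Quot.mk (relW K T) X) = ⟨⟨w, hw⟩, Quot.mk (relGrid K 𝒞 T w) ⟨Xbar K X, hX⟩⟩ := by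
  classical
  -- choice functions
  have hpe : ∀ x, ∃ j, x ∈ 𝒞 j := fun x => (hpart x).exists
  choose idx hidx using hpe
  have hidxu : ∀ x j, x ∈ 𝒞 j → j = idx x := fun x j h => (hpart x).unique h (hidx x)
  have hJe : ∀ v : Fin t → Fin s, ∃ w, w ∈ J ∧ ∃ τ, τ ∈ T ∧ (fun r => v (τ.symm r)) = w := by
    intro v
    obtain ⟨w, ⟨hw, τ, hτ, he⟩, -⟩ := hJ v
    exact ⟨w, hw, τ, hτ, he⟩
  choose wf hwJ τf hτT hτe using hJe
  have huniq : ∀ v w, w ∈ J → (∃ τ, τ ∈ T ∧ (fun r => v (τ.symm r)) = w) → w = wf v := by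
    intro v w hw hex
    exact (hJ v).unique ⟨hw, hex⟩ ⟨hwJ v, τf v, hτT v, hτe v⟩
  set vm : Finset (Fin k × Fin t) → Fin t → Fin s :=
    fun X r => idx (Xbar K X r) with hvm
  have hgmem : ∀ X r, Xbar K X ((τf (vm X)).symm r) ∈ 𝒞 (wf (vm X) r) := by
    intro X r
    have h1 := congrFun (hτe (vm X)) r
    rw [← h1]
    exact hidx _
  set Φ₀ : Finset (Fin k × Fin t) → Σ w : {w : Fin t → Fin s // w ∈ J}, Quot (relGrid K 𝒞 T w.1) :=
    fun X => ⟨⟨wf (vm X), hwJ _⟩,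
      Quot.mk _ ⟨fun r => Xbar K X ((τf (vm X)).symm r), hgmem X⟩⟩ with hΦ₀
  -- the key computation rule
  have key : ∀ (X : Finset (Fin k × Fin t)) (w : Fin t → Fin s) (hw : w ∈ J)
      (hX : ∀ r, Xbar K X r ∈ 𝒞 (w r)),
      Φ₀ X = ⟨⟨w, hw⟩, Quot.mk (relGrid K 𝒞 T w) ⟨Xbar K X, hX⟩⟩ := by
    intro X w hw hX
    have hvw : vm X = w := by
      funext r
      exact (hidxu _ _ (hX r)).symm
    have hwf : w = wf (vm X) := by
      apply huniq _ _ hw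
      exact ⟨1, one_mem _, by exact hvw⟩
    have hvwf : vm X = wf (vm X) := hvw.trans hwf
    have hstab : ∀ r, vm X ((τf (vm X)).symm r) = vm X r := fun r =>
      (congrFun (hτe (vm X)) r).trans (congrFun hvwf.symm r)
    apply sigma_congr 𝒞 (hwJ _) hw hwf
    refine ⟨(τf (vm X))⁻¹, inv_mem (hτT _), fun r => ?_, fun r => ?_⟩
    · have h1 : ((τf (vm X))⁻¹).symm r = τf (vm X) r := rfl
      rw [h1, ← hvwf]
      have := hstab (τf (vm X) r)
      simpa using this.symm
    · have h1 : ((τf (vm X))⁻¹).symm r = τf (vm X) r := rfl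
      show Xbar K X ((τf (vm X)).symm (((τf (vm X))⁻¹).symm r)) = Xbar K X r
      rw [h1, Equiv.symm_apply_apply]
  -- well-definedness
  have wd : ∀ X Y, relW K T X Y → Φ₀ X = Φ₀ Y := by
    intro X Y hXY
    obtain ⟨σ, hσT, hσ⟩ := relW_iff.mp hXY
    have hvYX : ∀ r, vm Y r = vm X (σ.symm r) := fun r => congrArg idx (hσ r).symm
    have hww : wf (vm X) = wf (vm Y) := by
      apply huniq (vm Y) (wf (vm X)) (hwJ _)
      refine ⟨τf (vm X) * σ⁻¹, mul_mem (hτT _) (inv_mem hσT), ?_⟩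
      funext r
      have h1 : (τf (vm X) * σ⁻¹).symm r = σ ((τf (vm X)).symm r) := rfl
      rw [h1, hvYX, Equiv.symm_apply_apply]
      exact congrFun (hτe (vm X)) r
    apply sigma_congr 𝒞 (hwJ _) (hwJ _) hww.symm
    refine ⟨τf (vm Y) * σ * (τf (vm X))⁻¹,
      mul_mem (mul_mem (hτT _) hσT) (inv_mem (hτT _)), fun r => ?_, fun r => ?_⟩
    · have h1 : (τf (vm Y) * σ * (τf (vm X))⁻¹).symm r
          = τf (vm X) (σ.symm ((τf (vm Y)).symm r)) := rfl
      rw [h1]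
      have h2 : wf (vm X) (τf (vm X) (σ.symm ((τf (vm Y)).symm r)))
          = vm X (σ.symm ((τf (vm Y)).symm r)) := by
        rw [← congrFun (hτe (vm X)) (τf (vm X) (σ.symm ((τf (vm Y)).symm r))),
          Equiv.symm_apply_apply]
      rw [h2, ← hvYX, congrFun (hτe (vm Y)) r, hww]
    · have h1 : (τf (vm Y) * σ * (τf (vm X))⁻¹).symm r
          = τf (vm X) (σ.symm ((τf (vm Y)).symm r)) := rfl
      show Xbar K X ((τf (vm X)).symm ((τf (vm Y) * σ * (τf (vm X))⁻¹).symm r))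
          = Xbar K Y ((τf (vm Y)).symm r)
      rw [h1, Equiv.symm_apply_apply, hσ]
  refine ⟨Quot.lift Φ₀ wd, ⟨?_, ?_⟩, fun X w hw hX => key X w hw hX⟩
  · -- injectivity
    intro a b
    induction a using Quot.ind with | _ X =>
    induction b using Quot.ind with | _ Y =>
    intro h
    obtain ⟨π, hπT, hπ⟩ := sigma_inj 𝒞 (hwJ (vm X)) (hwJ (vm Y)) _ _ h
    apply Quot.sound
    apply relW_iff.mpr
    refine ⟨(τf (vm Y))⁻¹ * π * τf (vm X), mul_mem (mul_mem (inv_mem (hτT _)) hπT) (hτT _),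
      fun r => ?_⟩
    have h1 : ((τf (vm Y))⁻¹ * π * τf (vm X)).symm r
        = (τf (vm X)).symm (π.symm (τf (vm Y) r)) := rfl
    rw [h1]
    have h2 := hπ (τf (vm Y) r)
    simpa using h2
  · -- surjectivity
    rintro ⟨⟨w, hw⟩, q⟩
    induction q using Quot.ind with | _ f =>
    obtain ⟨X, hX⟩ := exists_rep_Xbar f.1
    have hmem : ∀ r, Xbar K X r ∈ 𝒞 (w r) := fun r => by rw [hX]; exact f.2 r
    refine ⟨Quot.mk _ X, ?_⟩
    show Φ₀ X = _
    rw [key X w hw hmem]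
    exact congrArg
      (fun g : Grid K 𝒞 w =>
        (⟨⟨w, hw⟩, Quot.mk _ g⟩ :
          Σ u : {u : Fin t → Fin s // u ∈ J}, Quot (relGrid K 𝒞 T u.1)))
      (Subtype.ext hX)
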